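/- (Linear rate 1/2 for the shifted parabola.) In ℝ², let A = ℝ × {0} and B = {(u, v) : v ≥ 1 + u²/2}. For each x ∈ ℝ, the equation u·(2 + u²/2) = x has a unique real solution u = T(x), and the unique nearest point of B to (x, 0) is (T(x), 1 + T(x)²/2), while the unique nearest point of A to any (u, v) with v > 0 is (u, 0). Consequently the alternating projection sequence started at a₁ = (x₁, 0) with x₁ ≠ 0 is given by a_k = (x_k, 0) and b_k = (x_{k+1}, 1 + x_{k+1}²/2) with x_{k+1} = T(x_k), and it satisfies x_k → 0, x_{k+1}/x_k → 1/2, a_k → (0, 0), b_k → (0, 1); in particular the alternating projections converge to the gap pair ((0,0), (0,1)) with distance 1 at an asymptotic linear rate 1/2. -/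

import Mathlib

open Set Metric Filter Topology

noncomputable section

/-- The (possibly multivalued) metric projection onto a set `S`. -/
def projSet {E : Type*} [NormedAddCommGroup E] (S : Set E) (x : E) : Set E :=
  {s | s ∈ S ∧ ‖x - s‖ = Metric.infDist x S}

/-- A point of ℝ². -/
def pt2 (a b : ℝ) : EuclideanSpace ℝ (Fin 2) :=
  (WithLp.equiv 2 (Fin 2 → ℝ)).symm ![a, b]

/-- The horizontal axis `A = ℝ × {0}`. -/
def axisA : Set (EuclideanSpace ℝ (Fin 2)) := {p | p 1 = 0}

/-- The shifted parabola epigraph `B = {(u,v) : v ≥ 1 + u²/2}`. -/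
def parabB : Set (EuclideanSpace ℝ (Fin 2)) := {p | 1 + (p 0)^2/2 ≤ p 1}

@[simp] lemma pt2_apply0 (a b : ℝ) : pt2 a b 0 = a := rfl
@[simp] lemma pt2_apply1 (a b : ℝ) : pt2 a b 1 = b := rfl

lemma pt2_eta (p : EuclideanSpace ℝ (Fin 2)) : p = pt2 (p 0) (p 1) := by
  ext i; fin_cases i <;> rfl

lemma dist_pt2 (a b c d : ℝ) : dist (pt2 a b) (pt2 c d) = Real.sqrt ((a-c)^2 + (b-d)^2) := by
  rw [EuclideanSpace.dist_eq, Fin.sum_univ_two]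
  simp [Real.dist_eq, sq_abs]

lemma le_infDist' {E : Type*} [MetricSpace E] {s : Set E} {x : E} (hs : s.Nonempty)
    {d : ℝ} (h : ∀ y ∈ s, d ≤ dist x y) : d ≤ Metric.infDist x s := by
  by_contra hc
  rw [not_le] at hc
  obtain ⟨y, hy, hlt⟩ := (Metric.infDist_lt_iff hs).mp hc
  exact absurd (h y hy) (not_le.mpr hlt)

lemma strictMono_f : StrictMono (fun u : ℝ => u * (2 + u^2/2)) := by
  intro a b hab
  dsimp only
  nlinarith [sq_nonneg (a+b), sq_nonneg a, sq_nonneg b]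

lemma surj_f : Function.Surjective (fun u : ℝ => u * (2 + u^2/2)) := by
  have hc : Continuous (fun u : ℝ => u * (2 + u^2/2)) := by continuity
  apply Continuous.surjective hc
  · apply tendsto_atTop_mono' atTop (_ : ∀ᶠ u : ℝ in atTop, u ≤ u * (2 + u^2/2)) tendsto_id
    filter_upwards [eventually_ge_atTop (0:ℝ)] with u hu
    nlinarith [sq_nonneg u]
  · apply tendsto_atBot_mono' atBot (_ : ∀ᶠ u : ℝ in atBot, u * (2 + u^2/2) ≤ u) tendsto_id
    filter_upwards [eventually_le_atBot (0:ℝ)] with u hu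
    nlinarith [sq_nonneg u]

lemma keyAlg (u t s : ℝ) (hs : 1 + t^2/2 ≤ s) :
    (u*(2+u^2/2) - u)^2 + (0-(1+u^2/2))^2 ≤ (u*(2+u^2/2) - t)^2 + (0-s)^2 := by
  have h3 : (0:ℝ) ≤ (s - (1 + t^2/2)) * (s + (1 + t^2/2)) :=
    mul_nonneg (sub_nonneg.mpr hs) (by nlinarith [sq_nonneg t])
  nlinarith [sq_nonneg ((t-u)*(t+u)), sq_nonneg ((t-u)*u), sq_nonneg (t-u)]

lemma keyAlgEq (u t s : ℝ) (hs : 1 + t^2/2 ≤ s)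
    (heq : (u*(2+u^2/2) - t)^2 + (0-s)^2 = (u*(2+u^2/2) - u)^2 + (0-(1+u^2/2))^2) :
    t = u ∧ s = 1 + u^2/2 := by
  have h3 : (0:ℝ) ≤ (s - (1 + t^2/2)) * (s + (1 + t^2/2)) :=
    mul_nonneg (sub_nonneg.mpr hs) (by nlinarith [sq_nonneg t])
  have h8 : (t - u)^2 ≤ 0 := by
    nlinarith [sq_nonneg ((t-u)*(t+u)), sq_nonneg ((t-u)*u)]
  have ht : t = u := by
    have := sq_eq_zero_iff.mp (le_antisymm h8 (sq_nonneg _))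
    linarith
  subst ht
  have hsq : (s - (1 + t^2/2)) * (s + (1 + t^2/2)) = 0 := by nlinarith [heq]
  rcases mul_eq_zero.mp hsq with h | h
  · exact ⟨rfl, by linarith⟩
  · exfalso; nlinarith [sq_nonneg t]

lemma projB (x u : ℝ) (hu : u * (2 + u^2/2) = x) :
    projSet parabB (pt2 x 0) = {pt2 u (1 + u^2/2)} := by
  subst hu
  set x := u * (2 + u^2/2) with hx
  have hmem : pt2 u (1 + u^2/2) ∈ parabB := by
    show 1 + (pt2 u (1 + u^2/2) 0)^2/2 ≤ pt2 u (1 + u^2/2) 1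
    simp
  have key : ∀ t s : ℝ, 1 + t^2/2 ≤ s →
      (x - u)^2 + (0 - (1 + u^2/2))^2 ≤ (x - t)^2 + (0 - s)^2 := fun t s hs =>
    keyAlg u t s hs
  have hd : dist (pt2 x 0) (pt2 u (1 + u^2/2)) = Real.sqrt ((x-u)^2 + (0-(1+u^2/2))^2) :=
    dist_pt2 _ _ _ _
  have hinf : Metric.infDist (pt2 x 0) parabB = Real.sqrt ((x-u)^2 + (0-(1+u^2/2))^2) := by
    apply le_antisymm
    · calc Metric.infDist (pt2 x 0) parabB ≤ dist (pt2 x 0) (pt2 u (1 + u^2/2)) :=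
            Metric.infDist_le_dist_of_mem hmem
        _ = _ := hd
    · apply le_infDist' ⟨_, hmem⟩
      intro q hq
      rw [pt2_eta q, dist_pt2]
      exact Real.sqrt_le_sqrt (key (q 0) (q 1) hq)
  ext p
  simp only [projSet, Set.mem_setOf_eq, Set.mem_singleton_iff]
  constructor
  · rintro ⟨hpB, hdist⟩
    rw [← dist_eq_norm, hinf, pt2_eta p, dist_pt2] at hdist
    have hpB' : 1 + (p 0)^2/2 ≤ p 1 := hpB
    have h2 : (x - p 0)^2 + (0 - p 1)^2 = (x - u)^2 + (0 - (1 + u^2/2))^2 := by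
      have ha := Real.sq_sqrt (by positivity : (0:ℝ) ≤ (x - p 0)^2 + (0 - p 1)^2)
      have hb := Real.sq_sqrt (by positivity : (0:ℝ) ≤ (x - u)^2 + (0 - (1+u^2/2))^2)
      rw [hdist] at ha
      linarith
    obtain ⟨ht, hs1⟩ := keyAlgEq u (p 0) (p 1) hpB' h2
    rw [pt2_eta p, ht, hs1]
  · rintro rfl
    exact ⟨hmem, by rw [← dist_eq_norm, hd, hinf]⟩

lemma projA (u v : ℝ) (hv : 0 < v) : projSet axisA (pt2 u v) = {pt2 u 0} := by
  have hmem : pt2 u 0 ∈ axisA := rfl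
  have hd : dist (pt2 u v) (pt2 u 0) = v := by
    rw [dist_pt2]; simp [Real.sqrt_sq hv.le]
  have hinf : Metric.infDist (pt2 u v) axisA = v := by
    apply le_antisymm
    · calc Metric.infDist (pt2 u v) axisA ≤ dist (pt2 u v) (pt2 u 0) :=
            Metric.infDist_le_dist_of_mem hmem
        _ = v := hd
    · apply le_infDist' ⟨_, hmem⟩
      intro q hq
      rw [pt2_eta q, dist_pt2]
      have hq1 : q 1 = 0 := hq
      rw [hq1]
      calc v = Real.sqrt (v^2) := (Real.sqrt_sq hv.le).symm
        _ ≤ _ := by apply Real.sqrt_le_sqrt; nlinarith [sq_nonneg (u - q 0)]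
  ext p
  simp only [projSet, Set.mem_setOf_eq, Set.mem_singleton_iff]
  constructor
  · rintro ⟨hp, hdist⟩
    rw [← dist_eq_norm, hinf] at hdist
    have hp1 : p 1 = 0 := hp
    rw [pt2_eta p, hp1, dist_pt2] at hdist
    have h2 : (u - p 0)^2 + (v-0)^2 = v^2 := by
      have := Real.sq_sqrt (by positivity : (0:ℝ) ≤ (u - p 0)^2 + (v-0)^2)
      rw [hdist] at this; linarith [this]
    have h0 : p 0 = u := by nlinarith [sq_nonneg (u - p 0)]
    rw [pt2_eta p, hp1, h0]
  · rintro rfl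
    exact ⟨hmem, by rw [← dist_eq_norm, hd, hinf]⟩

/-- linear rate 1/2 for the shifted parabola. The equation
`u(2 + u²/2) = x` has a unique solution `u = T(x)`; the projections of `(x,0)` on `B` and
of points above the axis on `A` are as described; and the alternating projection iterates
`x_{k+1} = T(x_k)` satisfy `x_k → 0`, `x_{k+1}/x_k → 1/2`, with `a_k → (0,0)`,
`b_k → (0,1)` realizing the gap of distance 1 at asymptotic linear rate 1/2. -/
theorem statement19 :
    (∀ x : ℝ, ∃! u : ℝ, u * (2 + u^2/2) = x) ∧
    (∀ x u : ℝ, u * (2 + u^2/2) = x →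
      projSet parabB (pt2 x 0) = {pt2 u (1 + u^2/2)}) ∧
    (∀ u v : ℝ, 0 < v → projSet axisA (pt2 u v) = {pt2 u 0}) ∧
    (∀ x : ℕ → ℝ, x 0 ≠ 0 → (∀ k, x (k+1) * (2 + (x (k+1))^2/2) = x k) →
      (∀ k, pt2 (x (k+1)) (1 + (x (k+1))^2/2) ∈ projSet parabB (pt2 (x k) 0) ∧
        pt2 (x (k+1)) 0 ∈ projSet axisA (pt2 (x (k+1)) (1 + (x (k+1))^2/2))) ∧
      Tendsto x atTop (𝓝 0) ∧
      Tendsto (fun k => x (k+1) / x k) atTop (𝓝 (1/2)) ∧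
      Tendsto (fun k => pt2 (x k) 0) atTop (𝓝 (pt2 0 0)) ∧
      Tendsto (fun k => pt2 (x (k+1)) (1 + (x (k+1))^2/2)) atTop (𝓝 (pt2 0 1))) := by
  refine ⟨?_, fun x u hu => projB x u hu, fun u v hv => projA u v hv, ?_⟩
  · intro x
    obtain ⟨u, hu⟩ := surj_f x
    exact ⟨u, hu, fun y hy => strictMono_f.injective (hy.trans hu.symm)⟩
  · intro x hx0 hrec
    have hne : ∀ k, x k ≠ 0 := by
      intro k
      induction k with
      | zero => exact hx0
      | succ n ih =>
        intro h
        apply ih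
        rw [← hrec n, h]
        ring
    have hbound : ∀ k, |x (k+1)| ≤ |x k| / 2 := by
      intro k
      have h := hrec k
      have h2 : |x k| = |x (k+1)| * (2 + (x (k+1))^2/2) := by
        rw [← h, abs_mul, abs_of_pos (by positivity : (0:ℝ) < 2 + (x (k+1))^2/2)]
      nlinarith [abs_nonneg (x (k+1)), sq_nonneg (x (k+1)), abs_nonneg (x k)]
    have hgeo : ∀ k, |x k| ≤ |x 0| * (1/2)^k := by
      intro k
      induction k with
      | zero => simp
      | succ n ih =>
        calc |x (n+1)| ≤ |x n| / 2 := hbound n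
          _ ≤ (|x 0| * (1/2)^n) / 2 := by linarith
          _ = |x 0| * (1/2)^(n+1) := by ring
    have hlim : Tendsto x atTop (𝓝 0) := by
      apply squeeze_zero_norm (fun k => by simpa [Real.norm_eq_abs] using hgeo k)
      have : Tendsto (fun k : ℕ => ((1:ℝ)/2)^k) atTop (𝓝 0) :=
        tendsto_pow_atTop_nhds_zero_of_lt_one (by norm_num) (by norm_num)
      simpa using this.const_mul |x 0|
    have h1 : Tendsto (fun k => x (k+1)) atTop (𝓝 0) := hlim.comp (tendsto_add_atTop_nat 1)
    refine ⟨?_, hlim, ?_, ?_, ?_⟩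
    · intro k
      constructor
      · rw [projB (x k) (x (k+1)) (hrec k)]
        rfl
      · rw [projA (x (k+1)) (1 + (x (k+1))^2/2) (by positivity)]
        rfl
    · have h2 : Tendsto (fun k => (1:ℝ)/(2 + (x (k+1))^2/2)) atTop (𝓝 (1/(2 + (0:ℝ)^2/2))) := by
        apply Tendsto.div tendsto_const_nhds
        · exact tendsto_const_nhds.add ((h1.pow 2).div_const 2)
        · norm_num
      have heq : (fun k => x (k+1) / x k) = fun k => (1:ℝ)/(2 + (x (k+1))^2/2) := by
        funext k
        rw [← hrec k]
        field_simp [hne (k+1)]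
      rw [heq]
      convert h2 using 2
      norm_num
    · rw [tendsto_iff_dist_tendsto_zero]
      have : (fun k => dist (pt2 (x k) 0) (pt2 0 0)) = fun k => |x k| := by
        funext k
        rw [dist_pt2]
        simp [Real.sqrt_sq_eq_abs]
      rw [this]
      simpa using hlim.abs
    · rw [tendsto_iff_dist_tendsto_zero]
      have heq : (fun k => dist (pt2 (x (k+1)) (1 + (x (k+1))^2/2)) (pt2 0 1)) =
          fun k => Real.sqrt ((x (k+1))^2 + ((x (k+1))^2/2)^2) := by
        funext k
        rw [dist_pt2]
        ring_nf
      rw [heq]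
      have h2 : Tendsto (fun k => (x (k+1))^2 + ((x (k+1))^2/2)^2) atTop (𝓝 0) := by
        have := (h1.pow 2).add (((h1.pow 2).div_const 2).pow 2)
        simpa using this
      have := (Real.continuous_sqrt.tendsto 0).comp h2
      simpa [Function.comp_def] using this
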